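/- Let p, q ≥ 1 be integers and let i ≥ 1 be an odd integer. In the ring ℤ[t, t^{−1}] of Laurent polynomials, the element F_i(t) = Σ_{k=−(i−1)/2}^{(i−1)/2} ( t^{4pqk² − 4(p+q)k + 2} − t^{4pqk² − 4(p−q)k − 2} ) is divisible by t² − t^{−2}, and the quotient P_i(t) = F_i(t)/(t² − t^{−2}) satisfies ‖P_i‖₁ ≤ i·(2qi + 1). (By Morton's formula, up to multiplication by the monomial t^{pq(1−i²)}, the Laurent polynomial P_i is the i-th colored Jones polynomial of the (p,q)-torus knot, so the L¹-norms of the colored Jones polynomials of torus knots grow at most quadratically in the color.) -/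

import Mathlib

open LaurentPolynomial

/-- The `L¹`-norm `‖P‖₁ = Σ_d |a_d|` of a Laurent polynomial `P = Σ_d a_d t^d`. -/
def l1norm (P : LaurentPolynomial ℤ) : ℤ := P.coeff.sum fun _ a => |a|

/-- `F_i(t) = Σ_{k=−(i−1)/2}^{(i−1)/2} (t^{4pqk²−4(p+q)k+2} − t^{4pqk²−4(p−q)k−2})`,
the numerator in Morton's formula for the `i`-th colored Jones polynomial of the
`(p,q)`-torus knot. -/
noncomputable def mortonF (p q i : ℕ) : LaurentPolynomial ℤ :=
  ∑ k ∈ Finset.Icc (-(((i-1)/2 : ℕ) : ℤ)) (((i-1)/2 : ℕ) : ℤ),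
    (T (4*p*q*k^2 - 4*((p:ℤ)+q)*k + 2) - T (4*p*q*k^2 - 4*((p:ℤ)-q)*k - 2))

noncomputable def geomQ (b m : ℤ) : LaurentPolynomial ℤ :=
  (∑ j ∈ Finset.range m.toNat, T (b + 4*(j:ℤ) + 2)) -
    ∑ j ∈ Finset.range (-m).toNat, T (b - 4*(j:ℤ) - 2)

lemma geomQ_mul (b m : ℤ) : (T 2 - T (-2)) * geomQ b m = T (b + 4*m) - T b := by
  rcases le_or_gt 0 m with h | h
  · have h2 : (-m).toNat = 0 := by omega
    rw [geomQ, h2]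
    simp only [Finset.range_zero, Finset.sum_empty, sub_zero, Finset.mul_sum]
    calc ∑ j ∈ Finset.range m.toNat, (T 2 - T (-2)) * T (b + 4*(j:ℤ) + 2)
        = ∑ j ∈ Finset.range m.toNat,
            (T (b + 4*((j:ℤ)+1)) - T (b + 4*(j:ℤ))) := by
          refine Finset.sum_congr rfl fun j _ => ?_
          rw [sub_mul, ← T_add, ← T_add]; ring_nf
      _ = ∑ j ∈ Finset.range m.toNat,
            ((fun j : ℕ => T (b + 4*(j:ℤ))) (j+1) - (fun j : ℕ => T (b + 4*(j:ℤ))) j) := by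
          refine Finset.sum_congr rfl fun j _ => ?_
          push_cast
          ring_nf
      _ = T (b + 4*((m.toNat:ℕ):ℤ)) - T (b + 4*((0:ℕ):ℤ)) := by
          rw [Finset.sum_range_sub (f := fun j : ℕ => T (b + 4*(j:ℤ)))]
      _ = T (b + 4*m) - T b := by rw [Int.toNat_of_nonneg h]; norm_num
  · have h2 : m.toNat = 0 := by omega
    rw [geomQ, h2]
    simp only [Finset.range_zero, Finset.sum_empty, zero_sub, mul_neg, Finset.mul_sum]
    calc -∑ j ∈ Finset.range (-m).toNat, (T 2 - T (-2)) * T (b - 4*(j:ℤ) - 2)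
        = -∑ j ∈ Finset.range (-m).toNat,
            (T (b - 4*(j:ℤ)) - T (b - 4*((j:ℤ)+1))) := by
          refine congrArg _ (Finset.sum_congr rfl fun j _ => ?_)
          rw [sub_mul, ← T_add, ← T_add]; ring_nf
      _ = ∑ j ∈ Finset.range (-m).toNat,
            ((fun j : ℕ => T (b - 4*(j:ℤ))) (j+1) - (fun j : ℕ => T (b - 4*(j:ℤ))) j) := by
          rw [← Finset.sum_neg_distrib]
          refine Finset.sum_congr rfl fun j _ => ?_
          push_cast
          ring_nf
      _ = T (b - 4*((-m).toNat:ℤ)) - T (b - 4*((0:ℕ):ℤ)) := by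
          rw [Finset.sum_range_sub (f := fun j : ℕ => T (b - 4*(j:ℤ)))]
      _ = T (b - 4*((-m).toNat:ℤ)) - T b := by norm_num
      _ = T (b + 4*m) - T b := by
          rw [Int.toNat_of_nonneg (by omega : (0:ℤ) ≤ -m)]
          ring_nf

lemma l1norm_T (n : ℤ) : l1norm (T n) = 1 := by
  unfold l1norm T
  rw [AddMonoidAlgebra.coeff_single, Finsupp.sum_single_index] <;> simp

lemma l1norm_neg (P : LaurentPolynomial ℤ) : l1norm (-P) = l1norm P := by
  classical
  unfold l1norm
  rw [AddMonoidAlgebra.coeff_neg, Finsupp.sum, Finsupp.sum, Finsupp.support_neg]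
  exact Finset.sum_congr rfl fun d _ => by rw [Finsupp.neg_apply, abs_neg]

lemma l1norm_add_le (A B : LaurentPolynomial ℤ) :
    l1norm (A + B) ≤ l1norm A + l1norm B := by
  classical
  unfold l1norm
  rw [Finsupp.sum, Finsupp.sum, Finsupp.sum, AddMonoidAlgebra.coeff_add]
  calc ∑ d ∈ (A.coeff + B.coeff).support, |(A.coeff + B.coeff) d|
      ≤ ∑ d ∈ A.coeff.support ∪ B.coeff.support, |(A.coeff + B.coeff) d| := by
        refine Finset.sum_le_sum_of_subset_of_nonneg Finsupp.support_add
          fun d _ _ => abs_nonneg _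
    _ ≤ ∑ d ∈ A.coeff.support ∪ B.coeff.support, (|A.coeff d| + |B.coeff d|) := by
        refine Finset.sum_le_sum fun d _ => ?_
        rw [Finsupp.add_apply]
        exact abs_add_le (A.coeff d) (B.coeff d)
    _ = (∑ d ∈ A.coeff.support ∪ B.coeff.support, |A.coeff d|) + ∑ d ∈ A.coeff.support ∪ B.coeff.support, |B.coeff d| :=
        Finset.sum_add_distrib
    _ = (∑ d ∈ A.coeff.support, |A.coeff d|) + ∑ d ∈ B.coeff.support, |B.coeff d| := by
        congr 1
        · exact (Finset.sum_subset Finset.subset_union_left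
            (fun d _ hd => by simp [Finsupp.notMem_support_iff.mp hd])).symm
        · exact (Finset.sum_subset Finset.subset_union_right
            (fun d _ hd => by simp [Finsupp.notMem_support_iff.mp hd])).symm

lemma l1norm_sub_le (A B : LaurentPolynomial ℤ) :
    l1norm (A - B) ≤ l1norm A + l1norm B := by
  rw [sub_eq_add_neg]
  simpa [l1norm_neg] using l1norm_add_le A (-B)

lemma l1norm_sum_le {α : Type*} (s : Finset α) (f : α → LaurentPolynomial ℤ) :
    l1norm (∑ x ∈ s, f x) ≤ ∑ x ∈ s, l1norm (f x) := by
  classical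
  induction s using Finset.induction_on with
  | empty => simp [l1norm]
  | insert _ _ hx ih =>
    rw [Finset.sum_insert hx, Finset.sum_insert hx]
    exact (l1norm_add_le _ _).trans (by linarith)

lemma l1norm_sum_T_le {α : Type*} (s : Finset α) (c : α → ℤ) :
    l1norm (∑ x ∈ s, T (c x)) ≤ s.card := by
  calc l1norm (∑ x ∈ s, T (c x)) ≤ ∑ x ∈ s, l1norm (T (c x)) := l1norm_sum_le s _
    _ = s.card := by simp [l1norm_T]

lemma l1norm_geomQ_le (b m : ℤ) : l1norm (geomQ b m) ≤ |m| := by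
  have h1 := l1norm_sum_T_le (Finset.range m.toNat) (fun j : ℕ => b + 4*(j:ℤ) + 2)
  have h2 := l1norm_sum_T_le (Finset.range (-m).toNat) (fun j : ℕ => b - 4*(j:ℤ) - 2)
  have := l1norm_sub_le (∑ j ∈ Finset.range m.toNat, T (b + 4*(j:ℤ) + 2))
    (∑ j ∈ Finset.range (-m).toNat, T (b - 4*(j:ℤ) - 2))
  rw [geomQ]
  simp only [Finset.card_range] at h1 h2
  have habs : (m.toNat : ℤ) + ((-m).toNat : ℤ) = |m| := by
    rcases le_or_gt 0 m with h | h
    · rw [Int.toNat_of_nonneg h, abs_of_nonneg h]; omega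
    · rw [Int.toNat_of_nonneg (by omega : (0:ℤ) ≤ -m), abs_of_neg h]; omega
  omega

theorem stmt18 (p q i : ℕ) (hp : 1 ≤ p) (hq : 1 ≤ q) (hi : 1 ≤ i) (hodd : Odd i) :
    ∃ P : LaurentPolynomial ℤ,
      mortonF p q i = (T 2 - T (-2)) * P ∧ l1norm P ≤ i * (2*q*i + 1) := by
  set n : ℕ := (i-1)/2 with hn
  have hin : (i : ℤ) = 2*n + 1 := by
    obtain ⟨m, hm⟩ := hodd
    have : n = m := by omega
    omega
  refine ⟨∑ k ∈ Finset.Icc (-(n:ℤ)) (n:ℤ),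
    geomQ (4*p*q*k^2 - 4*((p:ℤ)-q)*k - 2) (1 - 2*q*k), ?_, ?_⟩
  · rw [Finset.mul_sum, mortonF]
    refine Finset.sum_congr rfl fun k _ => ?_
    rw [geomQ_mul]
    congr 1
    ring_nf
  · calc l1norm (∑ k ∈ Finset.Icc (-(n:ℤ)) (n:ℤ),
          geomQ (4*p*q*k^2 - 4*((p:ℤ)-q)*k - 2) (1 - 2*q*k))
        ≤ ∑ k ∈ Finset.Icc (-(n:ℤ)) (n:ℤ),
            l1norm (geomQ (4*p*q*k^2 - 4*((p:ℤ)-q)*k - 2) (1 - 2*q*k)) :=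
          l1norm_sum_le _ _
      _ ≤ ∑ k ∈ Finset.Icc (-(n:ℤ)) (n:ℤ), (2*(q:ℤ)*i + 1) := by
          refine Finset.sum_le_sum fun k hk => ?_
          refine (l1norm_geomQ_le _ _).trans ?_
          rw [Finset.mem_Icc] at hk
          have h1 : |(1 : ℤ) - 2*q*k| ≤ 1 + 2*q*|k| := by
            have := abs_sub (1:ℤ) (2*(q:ℤ)*k)
            have he : |(1:ℤ)| = 1 := by norm_num
            have h2 : |2*(q:ℤ)*k| = 2*q*|k| := by
              rw [abs_mul, abs_mul]
              norm_num
            omega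
          have hk2 : |k| ≤ (n:ℤ) := abs_le.mpr ⟨hk.1, hk.2⟩
          have hq0 : (0:ℤ) ≤ 2*q := by positivity
          nlinarith [hin, (by omega : (n:ℤ) ≤ i)]
      _ = ((2*n+1 : ℤ)) * (2*(q:ℤ)*i + 1) := by
          rw [Finset.sum_const, Int.card_Icc, nsmul_eq_mul]
          have hcard : ((n:ℤ) + 1 - -(n:ℤ)).toNat = 2*n+1 := by omega
          rw [hcard]
          push_cast
          ring
      _ ≤ i * (2*q*i + 1) := by
          push_cast
          rw [hin]
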